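/- Let G be a d-regular graph and xy an edge. If there exists a bijection f : Γ(x) \ {y} → Γ(y) \ {x} such that for each v ∈ Γ(x) \ {y}, either f(v) = v, or f(v) is adjacent to v, or f(v) = x and v = y (i.e., the mass at each neighbor moves distance at most 1), and moreover at least m vertices v satisfy f(v) = v, then the Wasserstein distance W₁(μ_x^{1/(d+1)}, μ_y^{1/(d+1)}) is at most (d − 1 − m)/(d + 1). -/

import Mathlib

open Finset SimpleGraph

variable {V : Type*} [Fintype V] [DecidableEq V]

/-- A graph is amply regular with parameters `(n, d, a, b)` if it is `d`-regular on `n`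
vertices, adjacent vertices have exactly `a` common neighbors, and vertices at distance 2
have exactly `b` common neighbors. -/
def SimpleGraph.IsAmplyRegular (G : SimpleGraph V) [DecidableRel G.Adj]
    (n d a b : ℕ) : Prop :=
  Fintype.card V = n ∧ G.IsRegularOfDegree d ∧
    (∀ x y, G.Adj x y → (G.neighborFinset x ∩ G.neighborFinset y).card = a) ∧
    (∀ x y, G.dist x y = 2 → (G.neighborFinset x ∩ G.neighborFinset y).card = b)

/-- The measure `μ_x^p` giving mass `p` to `x` and `(1-p)/deg x` to each neighbor of `x`. -/
noncomputable def muMeasure (G : SimpleGraph V) [DecidableRel G.Adj] (p : ℝ) (x : V) :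
    V → ℝ :=
  fun v => if v = x then p else if G.Adj x v then (1 - p) / (G.degree x : ℝ) else 0

/-- `pi` is a transport plan between `mu1` and `mu2`. -/
def IsTransportPlan (mu1 mu2 : V → ℝ) (pi : V → V → ℝ) : Prop :=
  (∀ u v, 0 ≤ pi u v) ∧ (∀ u, ∑ v, pi u v = mu1 u) ∧ (∀ v, ∑ u, pi u v = mu2 v)

/-- The 1-Wasserstein distance between two measures w.r.t. the graph distance. -/
noncomputable def W1 (G : SimpleGraph V) (mu1 mu2 : V → ℝ) : ℝ :=
  sInf {c : ℝ | ∃ pi, IsTransportPlan mu1 mu2 pi ∧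
    c = ∑ u, ∑ v, (G.dist u v : ℝ) * pi u v}

/-- The Lin-Lu-Yau curvature of an edge of a `d`-regular graph, via the idleness
`p = 1/(d+1)` formula of Bourne et al. -/
noncomputable def kappaLLY (G : SimpleGraph V) [DecidableRel G.Adj] (d : ℕ) (x y : V) :
    ℝ :=
  ((d + 1 : ℝ) / d) *
    (1 - W1 G (muMeasure G (1 / (d + 1 : ℝ)) x) (muMeasure G (1 / (d + 1 : ℝ)) y))

/-- `N_x = Γ(x) \ ({y} ∪ Γ(y))`. -/
def Nset (G : SimpleGraph V) [DecidableRel G.Adj] (x y : V) : Finset V :=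
  G.neighborFinset x \ insert y (G.neighborFinset y)

/-- `Δ_{xy} = Γ(x) ∩ Γ(y)`. -/
def Dset (G : SimpleGraph V) [DecidableRel G.Adj] (x y : V) : Finset V :=
  G.neighborFinset x ∩ G.neighborFinset y

/-- If the mass at each neighbor can be moved distance at most `1` via a bijection
`f : Γ(x)\{y} → Γ(y)\{x}` fixing at least `m` vertices, then
`W₁(μ_x^{1/(d+1)}, μ_y^{1/(d+1)}) ≤ (d - 1 - m)/(d + 1)`. -/
theorem stmt3 (G : SimpleGraph V) [DecidableRel G.Adj] {d m : ℕ}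
    (hreg : G.IsRegularOfDegree d) (x y : V) (hxy : G.Adj x y) (f : V → V)
    (hbij : Set.BijOn f ↑(G.neighborFinset x \ {y}) ↑(G.neighborFinset y \ {x}))
    (hmove : ∀ v ∈ G.neighborFinset x \ {y},
      f v = v ∨ G.Adj v (f v) ∨ (f v = x ∧ v = y))
    (hm : m ≤ ((G.neighborFinset x \ {y}).filter (fun v => f v = v)).card) :
    W1 G (muMeasure G (1 / (d + 1 : ℝ)) x) (muMeasure G (1 / (d + 1 : ℝ)) y) ≤
      ((d : ℝ) - 1 - m) / (d + 1) := by
  classical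
  set p : ℝ := 1 / (d + 1 : ℝ) with hp
  set S : Finset V := G.neighborFinset x \ {y} with hS
  set T : Finset V := G.neighborFinset y \ {x} with hT
  have hxney : x ≠ y := G.ne_of_adj hxy
  have hdx : G.degree x = d := hreg x
  have hdy : G.degree y = d := hreg y
  have hymem : y ∈ G.neighborFinset x := by simp [hxy]
  have hdpos : 0 < d := by
    rw [← hdx]
    exact (G.degree_pos_iff_exists_adj x).2 ⟨y, hxy⟩
  have hdR : (0:ℝ) < d := by exact_mod_cast hdpos
  have hd1R : (0:ℝ) < (d:ℝ) + 1 := by linarith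
  have hppos : 0 < p := by positivity
  have hq : (1 - p) / (d : ℝ) = p := by
    rw [hp]; field_simp; ring
  -- values of the measures
  have hmux : ∀ v, muMeasure G p x v =
      (if v = x then p else 0) + (if G.Adj x v then p else 0) := by
    intro v
    by_cases h : v = x
    · simp [muMeasure, h, G.loopless.irrefl x]
    · by_cases h2 : G.Adj x v <;> simp [muMeasure, h, h2, hdx, hq]
  have hmuy : ∀ v, muMeasure G p y v =
      (if v = y then p else 0) + (if G.Adj y v then p else 0) := by
    intro v
    by_cases h : v = y
    · simp [muMeasure, h, G.loopless.irrefl y]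
    · by_cases h2 : G.Adj y v <;> simp [muMeasure, h, h2, hdy, hq]
  -- the transport plan
  set π : V → V → ℝ := fun u v =>
    (if u = x ∧ v = x then p else 0) + (if u = y ∧ v = y then p else 0) +
      (if u ∈ S ∧ v = f u then p else 0) with hπ
  have hxS : x ∉ S := by simp [hS]
  have hyS : y ∉ S := by simp [hS]
  have hplan : IsTransportPlan (muMeasure G p x) (muMeasure G p y) π := by
    refine ⟨fun u v => ?_, fun u => ?_, fun v => ?_⟩
    · have := hppos.le
      dsimp [π]; positivity
    · -- row sums
      have h1 : ∑ v, (if u = x ∧ v = x then p else 0) = if u = x then p else 0 := by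
        by_cases h : u = x <;> simp [h]
      have h2 : ∑ v, (if u = y ∧ v = y then p else 0) = if u = y then p else 0 := by
        by_cases h : u = y <;> simp [h]
      have h3 : ∑ v, (if u ∈ S ∧ v = f u then p else 0) = if u ∈ S then p else 0 := by
        by_cases h : u ∈ S <;> simp [h]
      simp only [hπ, Finset.sum_add_distrib, h1, h2, h3, hmux u]
      by_cases hu1 : u = x
      · simp [hu1, hxS, G.loopless.irrefl x, hxney, hxney.symm]
      · by_cases hu2 : u = y
        · simp [hu2, hyS, hxy]
        · by_cases hu3 : G.Adj x u
          · have : u ∈ S := by simp [hS, hu3, hu2]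
            simp [hu1, hu2, hu3, this]
          · have : u ∉ S := by simp [hS, hu3]
            simp [hu1, hu2, hu3, this]
    · -- column sums
      have h1 : ∑ u, (if u = x ∧ v = x then p else 0) = if v = x then p else 0 := by
        by_cases h : v = x <;> simp [h]
      have h2 : ∑ u, (if u = y ∧ v = y then p else 0) = if v = y then p else 0 := by
        by_cases h : v = y <;> simp [h]
      have h3 : ∑ u, (if u ∈ S ∧ v = f u then p else 0) = if v ∈ T then p else 0 := by
        have e1 : ∑ u, (if u ∈ S ∧ v = f u then p else 0)
            = ∑ u ∈ S, (if v = f u then p else 0) := by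
          rw [← Finset.sum_subset (Finset.subset_univ S) (fun u _ hu => by simp [hu])]
          exact Finset.sum_congr rfl fun u hu => by simp [hu]
        have e2 : ∑ u ∈ S, (if v = f u then p else 0)
            = ∑ w ∈ T, (if v = w then p else 0) := by
          refine Finset.sum_nbij f (fun a ha => ?_) (fun a ha b hb hab => ?_)
            (fun b hb => ?_) (fun a _ => rfl)
          · exact hbij.mapsTo ha
          · exact hbij.injOn ha hb hab
          · exact hbij.surjOn hb
        rw [e1, e2, Finset.sum_ite_eq]
      simp only [hπ, Finset.sum_add_distrib, h1, h2, h3, hmuy v]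
      by_cases hv1 : v = x
      · have : x ∉ T := by simp [hT]
        simp [hv1, this, hxy.symm, hxney, hxney.symm]
      · by_cases hv2 : v = y
        · have : y ∉ T := by simp [hT]
          simp [hv2, this, G.loopless.irrefl y, hxney, hxney.symm]
        · by_cases hv3 : G.Adj y v
          · have : v ∈ T := by simp [hT, hv3, hv1]
            simp [hv1, hv2, hv3, this]
          · have : v ∉ T := by simp [hT, hv3]
            simp [hv1, hv2, hv3, this]
  -- the cost of the plan
  set C : ℝ := ∑ u, ∑ v, (G.dist u v : ℝ) * π u v with hC
  have hCeq : C = ∑ u ∈ S, (G.dist u (f u) : ℝ) * p := by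
    have expand : ∀ u v, (G.dist u v : ℝ) * π u v =
        (if u = x ∧ v = x then (G.dist u v : ℝ) * p else 0) +
          (if u = y ∧ v = y then (G.dist u v : ℝ) * p else 0) +
          (if u ∈ S ∧ v = f u then (G.dist u v : ℝ) * p else 0) := by
      intro u v
      simp [hπ, mul_add, mul_ite]
    have t1 : ∀ u : V, ∑ v, (if u = x ∧ v = x then (G.dist u v : ℝ) * p else 0)
        = if u = x then (G.dist u x : ℝ) * p else 0 := by
      intro u; by_cases h : u = x <;> simp [h]
    have t2 : ∀ u : V, ∑ v, (if u = y ∧ v = y then (G.dist u v : ℝ) * p else 0)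
        = if u = y then (G.dist u y : ℝ) * p else 0 := by
      intro u; by_cases h : u = y <;> simp [h]
    have t3 : ∀ u : V, ∑ v, (if u ∈ S ∧ v = f u then (G.dist u v : ℝ) * p else 0)
        = if u ∈ S then (G.dist u (f u) : ℝ) * p else 0 := by
      intro u; by_cases h : u ∈ S <;> simp [h]
    simp only [hC, expand, Finset.sum_add_distrib, t1, t2, t3]
    rw [Finset.sum_ite_eq' Finset.univ x, Finset.sum_ite_eq' Finset.univ y]
    have e3 : ∑ u, (if u ∈ S then (G.dist u (f u) : ℝ) * p else 0)
        = ∑ u ∈ S, (G.dist u (f u) : ℝ) * p := by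
      rw [← Finset.sum_subset (Finset.subset_univ S) (fun u _ hu => by simp [hu])]
      exact Finset.sum_congr rfl fun u hu => by simp [hu]
    simp [e3, SimpleGraph.dist_self]
  have hCle : C ≤ ((d : ℝ) - 1 - m) / (d + 1) := by
    rw [hCeq]
    have hstep : ∀ u ∈ S, (G.dist u (f u) : ℝ) * p ≤ (if f u = u then 0 else 1) * p := by
      intro u hu
      by_cases h : f u = u
      · simp [h, SimpleGraph.dist_self]
      · have huny : u ≠ y := by
          have := hu; rw [hS, Finset.mem_sdiff, Finset.mem_singleton] at this
          exact this.2
        have hadj : G.Adj u (f u) := by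
          rcases hmove u hu with h1 | h2 | ⟨_, h3⟩
          · exact absurd h1 h
          · exact h2
          · exact absurd h3 huny
        have hd1 : G.dist u (f u) = 1 := (SimpleGraph.dist_eq_one_iff_adj).2 hadj
        simp [h, hd1]
    refine le_trans (Finset.sum_le_sum hstep) ?_
    have hsum : ∑ u ∈ S, (if f u = u then (0:ℝ) else 1) * p
        = ((S.filter (fun u => ¬ f u = u)).card : ℝ) * p := by
      rw [Finset.sum_congr rfl (fun u _ => by rw [ite_mul, zero_mul, one_mul])]
      rw [Finset.sum_ite, Finset.sum_const_zero, zero_add, Finset.sum_const,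
        nsmul_eq_mul]
    rw [hsum]
    have hScard : S.card = d - 1 := by
      rw [hS, Finset.card_sdiff_of_subset (by simpa using hymem), Finset.card_singleton,
        G.card_neighborFinset_eq_degree, hdx]
    have hpart : (S.filter (fun u => f u = u)).card
        + (S.filter (fun u => ¬ f u = u)).card = d - 1 := by
      rw [Finset.card_filter_add_card_filter_not, hScard]
    have hcast : ((S.filter (fun u => f u = u)).card : ℝ)
        + ((S.filter (fun u => ¬ f u = u)).card : ℝ) = (d : ℝ) - 1 := by
      have hd1 : 1 ≤ d := hdpos
      have h2 : (((S.filter (fun u => f u = u)).card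
          + (S.filter (fun u => ¬ f u = u)).card : ℕ) : ℝ) = ((d - 1 : ℕ) : ℝ) := by
        exact_mod_cast congrArg (fun n : ℕ => (n : ℝ)) hpart
      push_cast [Nat.cast_sub hd1] at h2
      linarith
    have hmR : (m : ℝ) ≤ ((S.filter (fun u => f u = u)).card : ℝ) := by exact_mod_cast hm
    have hNF : ((S.filter (fun u => ¬ f u = u)).card : ℝ) ≤ (d : ℝ) - 1 - m := by
      linarith
    calc ((S.filter (fun u => ¬ f u = u)).card : ℝ) * p
        ≤ ((d : ℝ) - 1 - m) * p := mul_le_mul_of_nonneg_right hNF hppos.le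
      _ = ((d : ℝ) - 1 - m) / (d + 1) := by rw [hp]; ring
  have hmem : C ∈ {c : ℝ | ∃ pi, IsTransportPlan (muMeasure G p x) (muMeasure G p y) pi ∧
      c = ∑ u, ∑ v, (G.dist u v : ℝ) * pi u v} := ⟨π, hplan, rfl⟩
  have hbdd : BddBelow {c : ℝ | ∃ pi, IsTransportPlan (muMeasure G p x) (muMeasure G p y) pi ∧
      c = ∑ u, ∑ v, (G.dist u v : ℝ) * pi u v} := by
    refine ⟨0, fun c hc => ?_⟩
    obtain ⟨pi, hpi, rfl⟩ := hc
    apply Finset.sum_nonneg; intro u _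
    apply Finset.sum_nonneg; intro v _
    exact mul_nonneg (by positivity) (hpi.1 u v)
  exact le_trans (csInf_le hbdd hmem) hCle
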